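/- Let h ∈ ℝ and q ∈ ℂ with h < −|q|, and let z be a complex symmetric 2×2 matrix with Q(z) = q and H(z) = h. If A ∈ SL(2,ℝ) satisfies A·z·Aᵀ = z (with the entries of A viewed as complex numbers), then A = I or A = −I. That is, the stabilizer in SL(2,ℝ) of any point of M_{h,q} with h < −|q| is {±I}, so that PSL(2,ℝ) acts freely on M_{h,q}. -/

import Mathlib

lemma sq_lt_of_lt_neg_norm {h : ℝ} {q : ℂ} (hq : h < -‖q‖) :
    q.re ^ 2 + q.im ^ 2 < h ^ 2 := by
  have h1 : ‖q‖ ^ 2 = q.re ^ 2 + q.im ^ 2 := by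
    rw [Complex.sq_norm, Complex.normSq_apply]; ring
  nlinarith [norm_nonneg q, h1, hq]

lemma fin2_eq_one (A : Matrix (Fin 2) (Fin 2) ℝ) (h1 : A 0 0 = 1) (h2 : A 0 1 = 0)
    (h3 : A 1 0 = 0) (h4 : A 1 1 = 1) : A = 1 := by
  ext i j; fin_cases i <;> fin_cases j <;> simp [h1, h2, h3, h4]

lemma fin2_eq_neg_one (A : Matrix (Fin 2) (Fin 2) ℝ) (h1 : A 0 0 = -1) (h2 : A 0 1 = 0)
    (h3 : A 1 0 = 0) (h4 : A 1 1 = -1) : A = -1 := by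
  ext i j; fin_cases i <;> fin_cases j <;> simp [h1, h2, h3, h4]

/-- For `h < −|q|`, the stabilizer in SL(2,ℝ) of any point of `M_{h,q}`
(under the action `A·z = A z Aᵀ`) is `{±I}`, so PSL(2,ℝ) acts freely. -/
theorem stabilizer_pm_one (h : ℝ) (q : ℂ) (hq : h < -‖q‖)
    (z : Matrix (Fin 2) (Fin 2) ℂ) (hsym : z 0 1 = z 1 0)
    (hQ : z 0 0 * z 1 1 - (z 0 1) ^ 2 = q)
    (hH : (z 0 0 * starRingEnd ℂ (z 1 1)).re - ‖z 0 1‖ ^ 2 = h)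
    (A : Matrix (Fin 2) (Fin 2) ℝ) (hA : A.det = 1)
    (hfix : (A.map (fun r => (r : ℂ))) * z * (A.map (fun r => (r : ℂ))).transpose = z) :
    A = 1 ∨ A = -1 := by
  have h00 := congrFun (congrFun hfix 0) 0
  have h01 := congrFun (congrFun hfix 0) 1
  have h11 := congrFun (congrFun hfix 1) 1
  simp only [Matrix.mul_apply, Matrix.map_apply, Matrix.transpose_apply,
    Fin.sum_univ_two] at h00 h01 h11
  rw [← hsym] at h00 h01 h11
  rw [Matrix.det_fin_two] at hA
  -- names
  set a := A 0 0 with haA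
  set b := A 0 1 with hbA
  set c := A 1 0 with hcA
  set d := A 1 1 with hdA
  set p := (z 0 0).re with hpz
  set u := (z 0 0).im with huz
  set r := (z 0 1).re with hrz
  set w := (z 0 1).im with hwz
  set s := (z 1 1).re with hsz
  set v := (z 1 1).im with hvz
  -- real and imaginary equations
  have e1 := congrArg Complex.re h00
  have e1' := congrArg Complex.im h00
  have e2 := congrArg Complex.re h01
  have e2' := congrArg Complex.im h01
  have e3 := congrArg Complex.re h11
  have e3' := congrArg Complex.im h11
  simp only [Complex.add_re, Complex.add_im, Complex.mul_re, Complex.mul_im,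
    Complex.ofReal_re, Complex.ofReal_im] at e1 e1' e2 e2' e3 e3'
  ring_nf at e1 e1' e2 e2' e3 e3'
  -- the six linear relations
  have L1 : b * s + c * p = 0 := by linear_combination (-c) * e1 + a * e2 - (a*r + b*s) * hA
  have L3 : p * (a - d) + 2 * b * r = 0 := by linear_combination d * e1 - b * e2 - (a*p + b*r) * hA
  have L4 : s * (a - d) - 2 * r * c = 0 := by linear_combination c * e2 - a * e3 + (c*r + d*s) * hA
  have L2 : b * v + c * u = 0 := by linear_combination (-c) * e1' + a * e2' - (a*w + b*v) * hA
  have L5 : u * (a - d) + 2 * b * w = 0 := by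
    linear_combination d * e1' - b * e2' - (a*u + b*w) * hA
  have L6 : v * (a - d) - 2 * w * c = 0 := by
    linear_combination c * e2' - a * e3' + (c*w + d*v) * hA
  -- translate hQ, hH, hq
  have hre : p * s - r ^ 2 - (u * v - w ^ 2) = q.re := by
    have := congrArg Complex.re hQ
    simp only [Complex.sub_re, Complex.mul_re, pow_two, Complex.mul_im] at this ⊢
    linarith [this]
  have him : p * v + s * u - 2 * r * w = q.im := by
    have := congrArg Complex.im hQ
    simp only [Complex.sub_im, Complex.mul_re, Complex.mul_im, pow_two] at this ⊢
    linarith [this]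
  have hh : p * s - r ^ 2 + (u * v - w ^ 2) = h := by
    rw [← hH]
    have hn : ‖z 0 1‖ ^ 2 = r ^ 2 + w ^ 2 := by
      rw [hrz, hwz, Complex.sq_norm, Complex.normSq_apply]; ring
    rw [hn]
    simp only [Complex.mul_re, Complex.conj_re, Complex.conj_im]
    ring
  have hqsq : q.re ^ 2 + q.im ^ 2 < h ^ 2 := sq_lt_of_lt_neg_norm hq
  -- key inequality:  C² < 4 Qx Qy
  have key : (p * v + s * u - 2 * r * w) ^ 2 <
      4 * (p * s - r ^ 2) * (u * v - w ^ 2) := by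
    have expand : 4 * (p * s - r ^ 2) * (u * v - w ^ 2) - (p * v + s * u - 2 * r * w) ^ 2
        = h ^ 2 - q.re ^ 2 - q.im ^ 2 := by
      rw [← hre, ← him, ← hh]; ring
    linarith only [hqsq, expand]
  -- the minors cannot all vanish
  have hDs : ¬ (p * w - r * u = 0 ∧ p * v - s * u = 0 ∧ r * v - s * w = 0) := by
    rintro ⟨d1, d2, d3⟩
    have e : (p * v + s * u - 2 * r * w) ^ 2 = 4 * (p * s - r ^ 2) * (u * v - w ^ 2) := by
      linear_combination (p * v - s * u) * d2 - 4 * (r * v - s * w) * d1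
    exact absurd e (ne_of_lt key)
  -- products of (b, c, a-d) with the minors vanish
  have bD1 : b * (p * w - r * u) = 0 := by linear_combination (p * L5 - u * L3) / 2
  have bD2 : b * (p * v - s * u) = 0 := by linear_combination p * L2 - u * L1
  have bD3 : b * (r * v - s * w) = 0 := by linear_combination v * L3 / 2 - w * L1 - p * L6 / 2
  have cD1 : c * (p * w - r * u) = 0 := by linear_combination w * L1 + u * L4 / 2 - s * L5 / 2
  have cD2 : c * (p * v - s * u) = 0 := by linear_combination v * L1 - s * L2
  have cD3 : c * (r * v - s * w) = 0 := by linear_combination (s * L6 - v * L4) / 2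
  have tD1 : (a - d) * (p * w - r * u) = 0 := by linear_combination w * L3 - r * L5
  have tD2 : (a - d) * (p * v - s * u) = 0 := by
    linear_combination 2 * w * L1 + p * L6 - s * L5
  have tD3 : (a - d) * (r * v - s * w) = 0 := by linear_combination r * L6 - w * L4
  have hb : b = 0 := by
    by_contra hb
    exact hDs ⟨(mul_eq_zero.mp bD1).resolve_left hb, (mul_eq_zero.mp bD2).resolve_left hb,
      (mul_eq_zero.mp bD3).resolve_left hb⟩
  have hc : c = 0 := by
    by_contra hc
    exact hDs ⟨(mul_eq_zero.mp cD1).resolve_left hc, (mul_eq_zero.mp cD2).resolve_left hc,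
      (mul_eq_zero.mp cD3).resolve_left hc⟩
  have ht : a = d := by
    by_contra ht
    exact hDs ⟨(mul_eq_zero.mp tD1).resolve_left (sub_ne_zero.mpr ht),
      (mul_eq_zero.mp tD2).resolve_left (sub_ne_zero.mpr ht),
      (mul_eq_zero.mp tD3).resolve_left (sub_ne_zero.mpr ht)⟩
  have ha2 : (a - 1) * (a + 1) = 0 := by
    rw [← ht, hb, hc] at hA
    linear_combination hA
  rcases mul_eq_zero.mp ha2 with h1 | h1
  · left
    exact fin2_eq_one A (by rw [← haA]; linarith) (by rw [← hbA]; exact hb)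
      (by rw [← hcA]; exact hc) (by rw [← hdA, ← ht]; linarith)
  · right
    exact fin2_eq_neg_one A (by rw [← haA]; linarith) (by rw [← hbA]; exact hb)
      (by rw [← hcA]; exact hc) (by rw [← hdA, ← ht]; linarith)
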